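/- For positive definite n×n matrices A, B, C, the following are equivalent: (1) there exists an invertible X ∈ M_n(ℂ) such that XAX*, XBX*, XCX* pairwise commute; (2) A B^{-1} C = C B^{-1} A; (3) the matrices A^{-1/2} B A^{-1/2} and A^{-1/2} C A^{-1/2} commute. -/

import Mathlib

/-- Decreasing rearrangement of a finite real vector. -/
noncomputable def sortDesc {n : ℕ} (a : Fin n → ℝ) : Fin n → ℝ :=
  fun i => a (Tuple.sort a i.rev)

/-- Sum of the `k` largest entries of `a`. -/
noncomputable def topSum {n : ℕ} (a : Fin n → ℝ) (k : ℕ) : ℝ :=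
  ∑ i : Fin n, if (i : ℕ) < k then sortDesc a i else 0

/-- Product of the `k` largest entries of `a`. -/
noncomputable def topProd {n : ℕ} (a : Fin n → ℝ) (k : ℕ) : ℝ :=
  ∏ i : Fin n, if (i : ℕ) < k then sortDesc a i else 1

/-- `a ≺ b`: majorization of real vectors. -/
def Majorizes {n : ℕ} (a b : Fin n → ℝ) : Prop :=
  (∀ k : ℕ, k ≤ n → topSum a k ≤ topSum b k) ∧ ∑ i, a i = ∑ i, b i

/-- `a ≺_w b`: weak majorization of real vectors. -/
def WeakMajorizes {n : ℕ} (a b : Fin n → ℝ) : Prop :=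
  ∀ k : ℕ, k ≤ n → topSum a k ≤ topSum b k

/-- `a ≺_{log} b`: log-majorization of positive vectors. -/
def LogMajorizes {n : ℕ} (a b : Fin n → ℝ) : Prop :=
  (∀ k : ℕ, k ≤ n → topProd a k ≤ topProd b k) ∧ ∏ i, a i = ∏ i, b i

open Matrix
open scoped ComplexOrder

/-- Matrix logarithm (via the continuous functional calculus for Hermitian matrices). -/
noncomputable def mlog {n : ℕ} (A : Matrix (Fin n) (Fin n) ℂ) : Matrix (Fin n) (Fin n) ℂ :=
  cfc Real.log A

/-- Matrix exponential of a Hermitian matrix (via the continuous functional calculus). -/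
noncomputable def mexp {n : ℕ} (A : Matrix (Fin n) (Fin n) ℂ) : Matrix (Fin n) (Fin n) ℂ :=
  cfc Real.exp A

/-- Real power of a positive definite matrix (via the continuous functional calculus). -/
noncomputable def mpow {n : ℕ} (A : Matrix (Fin n) (Fin n) ℂ) (t : ℝ) : Matrix (Fin n) (Fin n) ℂ :=
  cfc (fun x : ℝ => x ^ t) A

/-- Schatten `p`-norm: `(∑ σ_i(X)^p)^(1/p)`, where `σ_i(X)^p = λ_i(XᴴX)^(p/2)`. -/
noncomputable def schatten {n : ℕ} (p : ℝ) (X : Matrix (Fin n) (Fin n) ℂ) : ℝ :=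
  (∑ i, ((Matrix.posSemidef_conjTranspose_mul_self X).1.eigenvalues i) ^ (p / 2)) ^ (1 / p)

/-- Finsler geodesic distance `δ_p(A,B) = ‖log (A^{-1/2} B A^{-1/2})‖_p`. -/
noncomputable def deltap {n : ℕ} (p : ℝ) (A B : Matrix (Fin n) (Fin n) ℂ) : ℝ :=
  schatten p (mlog (mpow A (-(1/2)) * B * mpow A (-(1/2))))

/-- Matrix geometric mean `A # B = A^{1/2} (A^{-1/2} B A^{-1/2})^{1/2} A^{1/2}`. -/
noncomputable def geomMean {n : ℕ} (A B : Matrix (Fin n) (Fin n) ℂ) : Matrix (Fin n) (Fin n) ℂ :=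
  mpow A (1/2) * mpow (mpow A (-(1/2)) * B * mpow A (-(1/2))) (1/2) * mpow A (1/2)

/-- Decreasingly ordered eigenvalue vector of a Hermitian matrix. -/
noncomputable def eigsDesc {n : ℕ} {A : Matrix (Fin n) (Fin n) ℂ} (hA : A.IsHermitian) :
    Fin n → ℝ :=
  fun i => hA.eigenvalues (Tuple.sort hA.eigenvalues i.rev)

section GammaHelpers
variable {n : ℕ}

lemma spec_pos {A : Matrix (Fin n) (Fin n) ℂ} (hA : A.PosDef) :
    ∀ x ∈ spectrum ℝ A, 0 < x := by
  rw [hA.isHermitian.spectrum_real_eq_range_eigenvalues]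
  rintro x ⟨i, rfl⟩
  exact hA.eigenvalues_pos i

lemma contOn {A : Matrix (Fin n) (Fin n) ℂ} (hA : A.PosDef) (t : ℝ) :
    ContinuousOn (fun x : ℝ => x ^ t) (spectrum ℝ A) := fun x hx =>
  (Real.continuousAt_rpow_const x t (Or.inl (spec_pos hA x hx).ne')).continuousWithinAt

lemma mpow_herm (A : Matrix (Fin n) (Fin n) ℂ) (t : ℝ) : (mpow A t)ᴴ = mpow A t :=
  (cfc_predicate (fun x : ℝ => x ^ t) A).star_eq

lemma mpow_add {A : Matrix (Fin n) (Fin n) ℂ} (hA : A.PosDef) (s t : ℝ) :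
    mpow A s * mpow A t = mpow A (s + t) := by
  rw [mpow, mpow, mpow, ← cfc_mul _ _ A (contOn hA s) (contOn hA t)]
  exact cfc_congr fun x hx => (Real.rpow_add (spec_pos hA x hx) s t).symm

lemma mpow_zero {A : Matrix (Fin n) (Fin n) ℂ} (hA : A.PosDef) : mpow A 0 = 1 := by
  rw [mpow]
  simp only [Real.rpow_zero]
  exact cfc_const_one ℝ A hA.1

lemma mpow_one {A : Matrix (Fin n) (Fin n) ℂ} (hA : A.PosDef) : mpow A 1 = A := by
  rw [mpow]
  simp only [Real.rpow_one]
  exact cfc_id' ℝ A hA.1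

lemma mpow_unit {A : Matrix (Fin n) (Fin n) ℂ} (hA : A.PosDef) (t : ℝ) :
    IsUnit (mpow A t) := by
  refine ⟨⟨mpow A t, mpow A (-t), ?_, ?_⟩, rfl⟩
  · rw [mpow_add hA, add_neg_cancel, mpow_zero hA]
  · rw [mpow_add hA, neg_add_cancel, mpow_zero hA]

lemma mpow_neg_one {A : Matrix (Fin n) (Fin n) ℂ} (hA : A.PosDef) : mpow A (-1) = A⁻¹ := by
  symm
  apply Matrix.inv_eq_right_inv
  calc A * mpow A (-1) = mpow A 1 * mpow A (-1) := by rw [mpow_one hA]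
    _ = 1 := by rw [mpow_add hA, add_neg_cancel, mpow_zero hA]

lemma P_mul_P {A : Matrix (Fin n) (Fin n) ℂ} (hA : A.PosDef) :
    mpow A (-(1/2)) * mpow A (-(1/2)) = A⁻¹ := by
  rw [mpow_add hA, show (-(1/2) + -(1/2) : ℝ) = -1 by norm_num, mpow_neg_one hA]

lemma PAP {A : Matrix (Fin n) (Fin n) ℂ} (hA : A.PosDef) :
    mpow A (-(1/2)) * A * mpow A (-(1/2)) = 1 := by
  calc mpow A (-(1/2)) * A * mpow A (-(1/2))
      = mpow A (-(1/2)) * mpow A 1 * mpow A (-(1/2)) := by rw [mpow_one hA]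
    _ = mpow A (-(1/2) + 1 + -(1/2)) := by rw [mpow_add hA, mpow_add hA]
    _ = 1 := by rw [show (-(1/2) + 1 + -(1/2) : ℝ) = 0 by norm_num, mpow_zero hA]

lemma comm3 (a b c : Matrix (Fin n) (Fin n) ℂ) (hb : IsUnit b)
    (hab : a * b = b * a) (hac : a * c = c * a) (hbc : b * c = c * b) :
    a * b⁻¹ * c = c * b⁻¹ * a := by
  have hbd : IsUnit b.det := (Matrix.isUnit_iff_isUnit_det b).mp hb
  have h1 : b * b⁻¹ = 1 := Matrix.mul_nonsing_inv b hbd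
  have h2 : b⁻¹ * b = 1 := Matrix.nonsing_inv_mul b hbd
  have hai : a * b⁻¹ = b⁻¹ * a := by
    calc a * b⁻¹ = b⁻¹ * (b * a) * b⁻¹ := by
          rw [← mul_assoc, h2, one_mul]
      _ = b⁻¹ * (a * b) * b⁻¹ := by rw [hab]
      _ = b⁻¹ * a := by rw [mul_assoc, mul_assoc, h1, mul_one]
  have hci : c * b⁻¹ = b⁻¹ * c := by
    calc c * b⁻¹ = b⁻¹ * (b * c) * b⁻¹ := by
          rw [← mul_assoc, h2, one_mul]
      _ = b⁻¹ * (c * b) * b⁻¹ := by rw [← hbc]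
      _ = b⁻¹ * c := by rw [mul_assoc, mul_assoc, h1, mul_one]
  calc a * b⁻¹ * c = b⁻¹ * (a * c) := by rw [hai, mul_assoc]
    _ = b⁻¹ * (c * a) := by rw [hac]
    _ = c * b⁻¹ * a := by rw [← mul_assoc, ← hci, mul_assoc]

lemma gamma_imp (X A B C : Matrix (Fin n) (Fin n) ℂ) (hX : IsUnit X) (hB : IsUnit B)
    (h1 : (X * A * Xᴴ) * (X * B * Xᴴ) = (X * B * Xᴴ) * (X * A * Xᴴ))
    (h2 : (X * A * Xᴴ) * (X * C * Xᴴ) = (X * C * Xᴴ) * (X * A * Xᴴ))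
    (h3 : (X * B * Xᴴ) * (X * C * Xᴴ) = (X * C * Xᴴ) * (X * B * Xᴴ)) :
    A * B⁻¹ * C = C * B⁻¹ * A := by
  have hXH : IsUnit Xᴴ := by
    have := hX.star
    rwa [Matrix.star_eq_conjTranspose] at this
  set S := Xᴴ * X with hS
  have hSu : IsUnit S := hXH.mul hX
  have cancel : ∀ M N : Matrix (Fin n) (Fin n) ℂ,
      X * M * Xᴴ = X * N * Xᴴ → M = N := fun M N h =>
    hX.mul_left_cancel (hXH.mul_right_cancel h)
  have e1 : A * S * B = B * S * A := cancel _ _ (by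
    simp only [hS, mul_assoc] at h1 ⊢; exact h1)
  have e2 : A * S * C = C * S * A := cancel _ _ (by
    simp only [hS, mul_assoc] at h2 ⊢; exact h2)
  have e3 : B * S * C = C * S * B := cancel _ _ (by
    simp only [hS, mul_assoc] at h3 ⊢; exact h3)
  have f1 : (S * A) * (S * B) = (S * B) * (S * A) := by
    calc (S * A) * (S * B) = S * (A * S * B) := by simp only [mul_assoc]
      _ = S * (B * S * A) := by rw [e1]
      _ = (S * B) * (S * A) := by simp only [mul_assoc]
  have f2 : (S * A) * (S * C) = (S * C) * (S * A) := by
    calc (S * A) * (S * C) = S * (A * S * C) := by simp only [mul_assoc]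
      _ = S * (C * S * A) := by rw [e2]
      _ = (S * C) * (S * A) := by simp only [mul_assoc]
  have f3 : (S * B) * (S * C) = (S * C) * (S * B) := by
    calc (S * B) * (S * C) = S * (B * S * C) := by simp only [mul_assoc]
      _ = S * (C * S * B) := by rw [e3]
      _ = (S * C) * (S * B) := by simp only [mul_assoc]
  have key := comm3 (S * A) (S * B) (S * C) (hSu.mul hB) f1 f2 f3
  rw [Matrix.mul_inv_rev] at key
  have hS1 : S⁻¹ * S = 1 := Matrix.nonsing_inv_mul S ((Matrix.isUnit_iff_isUnit_det S).mp hSu)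
  have h4 : ∀ M N : Matrix (Fin n) (Fin n) ℂ,
      S * M * (B⁻¹ * S⁻¹) * (S * N) = S * (M * B⁻¹ * N) := fun M N => by
    simp only [mul_assoc]
    rw [← mul_assoc S⁻¹ S N, hS1, one_mul]
  rw [h4, h4] at key
  exact hSu.mul_left_cancel key

end GammaHelpers

/-- Equivalent characterizations of Γ-commuting. -/
theorem stmt_8 {n : ℕ} (A B C : Matrix (Fin n) (Fin n) ℂ)
    (hA : A.PosDef) (hB : B.PosDef) (hC : C.PosDef) :
    ((∃ X : Matrix (Fin n) (Fin n) ℂ, IsUnit X ∧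
        (X * A * Xᴴ) * (X * B * Xᴴ) = (X * B * Xᴴ) * (X * A * Xᴴ) ∧
        (X * A * Xᴴ) * (X * C * Xᴴ) = (X * C * Xᴴ) * (X * A * Xᴴ) ∧
        (X * B * Xᴴ) * (X * C * Xᴴ) = (X * C * Xᴴ) * (X * B * Xᴴ)) ↔
      A * B⁻¹ * C = C * B⁻¹ * A) ∧
    (A * B⁻¹ * C = C * B⁻¹ * A ↔
      (mpow A (-(1/2)) * B * mpow A (-(1/2))) * (mpow A (-(1/2)) * C * mpow A (-(1/2))) =
        (mpow A (-(1/2)) * C * mpow A (-(1/2))) * (mpow A (-(1/2)) * B * mpow A (-(1/2)))) := by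
  have hBu := hB.isUnit
  have hAu := hA.isUnit
  have first : (∃ X : Matrix (Fin n) (Fin n) ℂ, IsUnit X ∧
        (X * A * Xᴴ) * (X * B * Xᴴ) = (X * B * Xᴴ) * (X * A * Xᴴ) ∧
        (X * A * Xᴴ) * (X * C * Xᴴ) = (X * C * Xᴴ) * (X * A * Xᴴ) ∧
        (X * B * Xᴴ) * (X * C * Xᴴ) = (X * C * Xᴴ) * (X * B * Xᴴ)) ↔
      A * B⁻¹ * C = C * B⁻¹ * A := by
    constructor
    · rintro ⟨X, hX, h1, h2, h3⟩
      exact gamma_imp X A B C hX hBu h1 h2 h3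
    · intro h
      set Q := mpow B (-(1/2)) with hQdef
      have hQH : Qᴴ = Q := mpow_herm B _
      have hQBQ : Q * B * Qᴴ = 1 := by rw [hQH]; exact PAP hB
      have hQQ : Q * Q = B⁻¹ := P_mul_P hB
      have key : ∀ M N : Matrix (Fin n) (Fin n) ℂ,
          (Q * M * Qᴴ) * (Q * N * Qᴴ) = Q * (M * B⁻¹ * N) * Q := fun M N => by
        rw [hQH]
        simp only [mul_assoc]
        rw [← mul_assoc Q Q (N * Q), hQQ]
      refine ⟨Q, mpow_unit hB _, ?_, ?_, ?_⟩
      · rw [hQBQ, mul_one, one_mul]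
      · rw [key, key, h]
      · rw [hQBQ, mul_one, one_mul]
  refine ⟨first, ?_, ?_⟩
  · intro h
    obtain ⟨X, hX, h1, h2, h3⟩ := first.mpr h
    have hBAC : B * A⁻¹ * C = C * A⁻¹ * B := gamma_imp X B A C hX hAu h1.symm h3 h2
    set P := mpow A (-(1/2)) with hPdef
    have hPP : P * P = A⁻¹ := P_mul_P hA
    have key : ∀ M N : Matrix (Fin n) (Fin n) ℂ,
        (P * M * P) * (P * N * P) = P * (M * A⁻¹ * N) * P := fun M N => by
      simp only [mul_assoc]
      rw [← mul_assoc P P (N * P), hPP]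
    rw [key, key, hBAC]
  · intro h
    apply first.mp
    set P := mpow A (-(1/2)) with hPdef
    have hPH : Pᴴ = P := mpow_herm A _
    have hPAP : P * A * Pᴴ = 1 := by rw [hPH]; exact PAP hA
    refine ⟨P, mpow_unit hA _, ?_, ?_, ?_⟩
    · rw [hPAP, mul_one, one_mul]
    · rw [hPAP, mul_one, one_mul]
    · rw [hPH]; exact h
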